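/- For every signed graph Γ = ((V,E), σ), the smallest Laplacian eigenvalue is bounded above by the frustration number, which in turn is bounded above by the frustration index: λ₁(Γ) ≤ ν(Γ) ≤ ε(Γ). -/

import Mathlib

open Matrix Finset

attribute [local instance 10] Classical.propDecidable

variable {V : Type*}

/-- The signed Laplacian of a signed graph `(G, σ)`: diagonal entries are vertex degrees,
and for `i ≠ j` the entry is `-σ i j` if `(i,j)` is an edge and `0` otherwise. -/
noncomputable def signedLaplacian [Fintype V] [DecidableEq V] (G : SimpleGraph V)
    (σ : V → V → ℝ) : Matrix V V ℝ :=
  Matrix.of fun i j =>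
    if i = j then (G.degree i : ℝ) else if G.Adj i j then -σ i j else 0

/-- A signed graph is balanced if the vertices can be partitioned into `S` and `Sᶜ` so that
edges inside a part are positive and edges across parts are negative. -/
def IsBalanced (G : SimpleGraph V) (σ : V → V → ℝ) : Prop :=
  ∃ S : Set V, ∀ i j, G.Adj i j → (σ i j = 1 ↔ (i ∈ S ↔ j ∈ S))

/-- The induced (signed) subgraph on vertex set `W` is balanced. -/
def IsBalancedOn (G : SimpleGraph V) (σ : V → V → ℝ) (W : Set V) : Prop :=
  ∃ S : Set V, ∀ i ∈ W, ∀ j ∈ W, G.Adj i j → (σ i j = 1 ↔ (i ∈ S ↔ j ∈ S))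

/-- Current balance `Δ`: the maximum number of vertices of an induced subgraph that is
connected and balanced. -/
noncomputable def currentBalance [Fintype V] (G : SimpleGraph V) (σ : V → V → ℝ) : ℕ :=
  sSup {k : ℕ | ∃ W : Set V, W.ncard = k ∧ (G.induce W).Connected ∧ IsBalancedOn G σ W}

/-- Frustration number `ν`: minimum number of vertices whose deletion leaves a balanced graph. -/
noncomputable def frustrationNumber [Fintype V] (G : SimpleGraph V) (σ : V → V → ℝ) : ℕ :=
  sInf {k : ℕ | ∃ D : Set V, D.ncard = k ∧ IsBalancedOn G σ Dᶜ}

/-- Frustration index `ε`: minimum number of edges whose deletion leaves a balanced graph. -/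
noncomputable def frustrationIndex [Fintype V] (G : SimpleGraph V) (σ : V → V → ℝ) : ℕ :=
  sInf {k : ℕ | ∃ X : Set (Sym2 V), X ⊆ G.edgeSet ∧ X.ncard = k ∧
    IsBalanced (G.deleteEdges X) σ}

/-- The smallest eigenvalue of a Hermitian (real symmetric) matrix. -/
noncomputable def smallestEigenvalue [Fintype V] [DecidableEq V] {A : Matrix V V ℝ}
    (hA : A.IsHermitian) : ℝ :=
  ⨅ i, hA.eigenvalues i

/-- The function on unordered edges `{i, j} ↦ (v i - σ i j * v j)^2`. -/
noncomputable def edgeWeight (σ : V → V → ℝ) (hsym : ∀ i j, σ i j = σ j i)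
    (hsign : ∀ i j, σ i j = 1 ∨ σ i j = -1) (v : V → ℝ) : Sym2 V → ℝ :=
  Sym2.lift ⟨fun i j => (v i - σ i j * v j) ^ 2, fun a b => by
    show (v a - σ a b * v b) ^ 2 = (v b - σ b a * v a) ^ 2
    rw [hsym b a]
    rcases hsign a b with h | h <;> rw [h] <;> ring⟩

lemma rayleigh [Fintype V] [DecidableEq V] [Nonempty V] {A : Matrix V V ℝ}
    (hA : A.IsHermitian) (v : V → ℝ) :
    smallestEigenvalue hA * (v ⬝ᵥ v) ≤ v ⬝ᵥ (A *ᵥ v) := by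
  set U : Matrix V V ℝ := (hA.eigenvectorUnitary : Matrix V V ℝ) with hU
  have hstar : ∀ (x y : V → ℝ) (M : Matrix V V ℝ), x ⬝ᵥ (M *ᵥ y) = (Mᵀ *ᵥ x) ⬝ᵥ y := by
    intro x y M
    rw [dotProduct_mulVec, mulVec_transpose]
  set w : V → ℝ := star U *ᵥ v with hw
  have hstarU : star U = Uᵀ := by
    simp [Matrix.star_eq_conjTranspose, conjTranspose]
    ext i j
    simp [Matrix.map_apply]
  have hUU : U * star U = 1 := (Matrix.mem_unitaryGroup_iff).mp hA.eigenvectorUnitary.2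
  have hval : v ⬝ᵥ (A *ᵥ v) = ∑ i, hA.eigenvalues i * (w i)^2 := by
    conv_lhs => rw [hA.spectral_theorem, Unitary.conjStarAlgAut_apply]
    rw [← mulVec_mulVec, ← mulVec_mulVec, hstar, ← hstarU]
    have : (diagonal (RCLike.ofReal ∘ hA.eigenvalues) : Matrix V V ℝ) *ᵥ (star U *ᵥ v)
        = fun i => hA.eigenvalues i * w i := by
      ext i
      simp [mulVec_diagonal, hw]
    rw [this, ← hw]
    simp [dotProduct, mul_comm, sq]
    exact Finset.sum_congr rfl fun i _ => by ring
  have hnorm : v ⬝ᵥ v = ∑ i, (w i)^2 := by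
    have : ∑ i, (w i)^2 = w ⬝ᵥ w := by simp [dotProduct, sq]
    rw [this, hw, hstarU, hstar, transpose_transpose, mulVec_mulVec, ← hstarU, hUU, one_mulVec]
  have hmin : ∀ i, smallestEigenvalue hA ≤ hA.eigenvalues i := fun i =>
    ciInf_le (Set.Finite.bddBelow (Set.finite_range _)) i
  rw [hval, hnorm, Finset.mul_sum]
  exact Finset.sum_le_sum fun i _ =>
    mul_le_mul_of_nonneg_right (hmin i) (sq_nonneg _)


/-- `λ₁(Γ) ≤ ν(Γ) ≤ ε(Γ)`: the smallest Laplacian eigenvalue is at most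
the frustration number, which is at most the frustration index. -/
theorem smallestEigenvalue_le_frustrationNumber_le_frustrationIndex
    [Fintype V] [DecidableEq V] [Nonempty V]
    (G : SimpleGraph V) (σ : V → V → ℝ)
    (hsym : ∀ i j, σ i j = σ j i)
    (hsign : ∀ i j, σ i j = 1 ∨ σ i j = -1)
    (hL : (signedLaplacian G σ).IsHermitian) :
    smallestEigenvalue hL ≤ (frustrationNumber G σ : ℝ) ∧
      frustrationNumber G σ ≤ frustrationIndex G σ := by
  -- nonemptiness of the frustration number set
  have hAne : {k : ℕ | ∃ D : Set V, D.ncard = k ∧ IsBalancedOn G σ Dᶜ}.Nonempty := by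
    refine ⟨(Set.univ : Set V).ncard, Set.univ, rfl, ∅, fun i hi => ?_⟩
    simp at hi
  have hνmem : frustrationNumber G σ ∈
      {k : ℕ | ∃ D : Set V, D.ncard = k ∧ IsBalancedOn G σ Dᶜ} := Nat.sInf_mem hAne
  obtain ⟨D, hDcard, S, hS⟩ := hνmem
  set ν := frustrationNumber G σ with hν
  constructor
  · -- λ₁ ≤ ν
    classical
    set ζ : V → ℝ := fun i => if i ∈ S then 1 else -1 with hζ
    set v : V → ℝ := fun i => if i ∈ D then 0 else ζ i with hv
    set Dc : Finset V := Finset.univ.filter (fun i => i ∉ D) with hDc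
    by_cases hm : Dc.card = 0
    · -- D = univ
      have hall : ∀ i : V, i ∈ D := by
        intro i
        by_contra h
        have : i ∈ Dc := by simp [hDc, h]
        have := Finset.card_pos.mpr ⟨i, this⟩
        omega
      have hDuniv : D = Set.univ := Set.eq_univ_of_forall hall
      have hνval : ν = Fintype.card V := by
        rw [← hDcard, hDuniv, Set.ncard_univ, Nat.card_eq_fintype_card]
      obtain ⟨i₀⟩ := ‹Nonempty V›
      have hr := rayleigh hL (Pi.single i₀ 1)
      have h1 : (Pi.single i₀ 1 : V → ℝ) ⬝ᵥ (Pi.single i₀ 1) = 1 := by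
        simp [dotProduct_single]
      have h2 : (Pi.single i₀ 1 : V → ℝ) ⬝ᵥ (signedLaplacian G σ *ᵥ Pi.single i₀ 1)
          = (G.degree i₀ : ℝ) := by
        simp [single_dotProduct, mulVec_single, signedLaplacian]
      rw [h1, h2, mul_one] at hr
      refine hr.trans ?_
      have : G.degree i₀ ≤ ν := by
        rw [hνval]
        exact (G.degree_lt_card_verts i₀).le
      exact_mod_cast this
    · have hmpos : 0 < Dc.card := Nat.pos_of_ne_zero hm
      have hr := rayleigh hL v
      have hvsq : ∀ i, v i * v i = if i ∈ D then 0 else 1 := by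
        intro i
        by_cases hi : i ∈ D <;> by_cases hiS : i ∈ S <;> simp [hv, hζ, hi, hiS]
      have hsum01 : ∀ c : ℝ, ∑ i, (if i ∈ D then 0 else c) = Dc.card * c := by
        intro c
        rw [Finset.sum_ite, Finset.sum_const, Finset.sum_const, smul_zero, zero_add,
          nsmul_eq_mul, hDc]
      have hvv : v ⬝ᵥ v = (Dc.card : ℝ) := by
        simp only [dotProduct, hvsq]
        rw [hsum01 1, mul_one]
      -- pointwise Laplacian row computation
      have hrow : ∀ i, (signedLaplacian G σ *ᵥ v) i
          = (G.degree i : ℝ) * v i + ∑ j, (if G.Adj i j then -σ i j * v j else 0) := by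
        intro i
        have hLij : ∀ j, signedLaplacian G σ i j * v j
            = (if i = j then (G.degree i : ℝ) * v i else 0)
              + (if G.Adj i j then -σ i j * v j else 0) := by
          intro j
          by_cases h : i = j
          · subst h
            simp [signedLaplacian, SimpleGraph.irrefl]
          · simp [signedLaplacian, h]
        simp only [mulVec, dotProduct, hLij, Finset.sum_add_distrib,
          Finset.sum_ite_eq, Finset.mem_univ, if_true]
      have hterm : ∀ i, v i * (signedLaplacian G σ *ᵥ v) i
          ≤ (if i ∈ D then 0 else (ν : ℝ)) := by
        intro i
        by_cases hiD : i ∈ D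
        · have : v i = 0 := by simp [hv, hiD]
          simp [this, hiD]
        · rw [hrow, if_neg hiD]
          have hvi : v i = ζ i := by simp [hv, hiD]
          have hsummand : ∀ j, v i * (if G.Adj i j then -σ i j * v j else 0)
              = -(if G.Adj i j ∧ j ∉ D then 1 else 0) := by
            intro j
            by_cases hadj : G.Adj i j
            · by_cases hjD : j ∈ D
              · have : v j = 0 := by simp [hv, hjD]
                simp [hadj, hjD, this]
              · have hvj : v j = ζ j := by simp [hv, hjD]
                have hbal := hS i hiD j hjD hadj
                have hkey : σ i j * (ζ i * ζ j) = 1 := by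
                  rcases hsign i j with h1 | h1
                  · have hiff := hbal.mp h1
                    by_cases hiS : i ∈ S
                    · have hjS : j ∈ S := hiff.mp hiS
                      simp [hζ, hiS, hjS, h1]
                    · have hjS : j ∉ S := fun h => hiS (hiff.mpr h)
                      simp [hζ, hiS, hjS, h1]
                  · have hiff : ¬(i ∈ S ↔ j ∈ S) := by
                      intro h
                      have := hbal.mpr h
                      rw [h1] at this
                      norm_num at this
                    by_cases hiS : i ∈ S
                    · have hjS : j ∉ S := fun h => hiff ⟨fun _ => h, fun _ => hiS⟩
                      simp [hζ, hiS, hjS, h1]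
                    · have hjS : j ∈ S := by
                        by_contra hjS
                        exact hiff ⟨fun h => absurd h hiS, fun h => absurd h hjS⟩
                      simp [hζ, hiS, hjS, h1]
                rw [if_pos hadj, if_pos ⟨hadj, hjD⟩, hvi, hvj]
                nlinarith [hkey]
            · simp [hadj]
          rw [mul_add, Finset.mul_sum]
          simp only [hsummand]
          rw [Finset.sum_neg_distrib]
          have hsumcard : ∑ j, (if G.Adj i j ∧ j ∉ D then (1:ℝ) else 0)
              = ((Finset.univ.filter (fun j => G.Adj i j ∧ j ∉ D)).card : ℝ) := by
            rw [Finset.sum_ite, Finset.sum_const, Finset.sum_const]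
            simp
          rw [hsumcard, hvi]
          have hζsq : ζ i * ζ i = 1 := by
            by_cases hiS : i ∈ S <;> simp [hζ, hiS]
          have hdeg : G.degree i
              ≤ ν + (Finset.univ.filter (fun j => G.Adj i j ∧ j ∉ D)).card := by
            have hsplit : (Finset.univ.filter (fun j => G.Adj i j ∧ j ∈ D)).card
                + (Finset.univ.filter (fun j => G.Adj i j ∧ j ∉ D)).card
                = G.degree i := by
              rw [SimpleGraph.degree, SimpleGraph.neighborFinset]
              rw [← Finset.filter_filter, ← Finset.filter_filter]
              rw [Finset.card_filter_add_card_filter_not]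
              congr 1
              ext j
              simp [SimpleGraph.neighborSet]
              exact Set.mem_toFinset.symm
            have hle : (Finset.univ.filter (fun j => G.Adj i j ∧ j ∈ D)).card ≤ ν := by
              rw [← hDcard, Set.ncard_eq_toFinset_card']
              apply Finset.card_le_card
              intro j hj
              simp only [Finset.mem_filter] at hj
              simpa using hj.2.2
            omega
          have : (G.degree i : ℝ)
              ≤ (ν : ℝ) + ((Finset.univ.filter (fun j => G.Adj i j ∧ j ∉ D)).card : ℝ) := by
            exact_mod_cast hdeg
          nlinarith [hζsq]
      have hub : v ⬝ᵥ (signedLaplacian G σ *ᵥ v) ≤ (Dc.card : ℝ) * (ν : ℝ) := by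
        calc v ⬝ᵥ (signedLaplacian G σ *ᵥ v)
            = ∑ i, v i * (signedLaplacian G σ *ᵥ v) i := by simp [dotProduct]
          _ ≤ ∑ i, (if i ∈ D then 0 else (ν : ℝ)) := Finset.sum_le_sum fun i _ => hterm i
          _ = (Dc.card : ℝ) * (ν : ℝ) := hsum01 _
      rw [hvv] at hr
      have := hr.trans hub
      have hcpos : (0:ℝ) < (Dc.card : ℝ) := by exact_mod_cast hmpos
      nlinarith [this, hcpos]
  · -- ν ≤ ε
    have hBne : {k : ℕ | ∃ X : Set (Sym2 V), X ⊆ G.edgeSet ∧ X.ncard = k ∧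
        IsBalanced (G.deleteEdges X) σ}.Nonempty := by
      refine ⟨_, {e | ∃ i j, G.Adj i j ∧ σ i j = -1 ∧ e = s(i,j)}, ?_, rfl, Set.univ, ?_⟩
      · rintro e ⟨i, j, hadj, -, rfl⟩
        exact hadj
      · intro i j hadj
        rw [SimpleGraph.deleteEdges_adj] at hadj
        constructor
        · intro _; simp
        · intro _
          rcases hsign i j with h | h
          · exact h
          · exact absurd ⟨i, j, hadj.1, h, rfl⟩ hadj.2
    obtain ⟨X, hXsub, hXcard, S2, hS2⟩ := Nat.sInf_mem hBne
    set Dv : Set V := (fun e : Sym2 V => e.out.1) '' X with hDv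
    have hbal : IsBalancedOn G σ Dvᶜ := by
      refine ⟨S2, fun i hi j hj hadj => ?_⟩
      have hnot : s(i, j) ∉ X := by
        intro hmem
        have h1 : (s(i, j)).out.1 ∈ Dv := ⟨_, hmem, rfl⟩
        have h2 := Sym2.out_fst_mem s(i, j)
        rw [Sym2.mem_iff] at h2
        rcases h2 with h2 | h2 <;> rw [h2] at h1
        · exact hi h1
        · exact hj h1
      exact hS2 i j (SimpleGraph.deleteEdges_adj.mpr ⟨hadj, hnot⟩)
    calc ν ≤ Dv.ncard := Nat.sInf_le ⟨Dv, rfl, hbal⟩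
      _ ≤ X.ncard := Set.ncard_image_le (Set.toFinite X)
      _ = frustrationIndex G σ := hXcard
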